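/- A minimal counterexample to the statement 'every planar graph G satisfies χ'_a(G) ≤ max{Δ(G), 4.2·10^14}' must be 2-connected. -/

import Mathlib

/-- A proper edge-coloring: edges sharing an endpoint get distinct colors. -/
def ProperEdgeColoring {V : Type*} (G : SimpleGraph V) (c : Sym2 V → ℕ) : Prop :=
  ∀ e₁ ∈ G.edgeSet, ∀ e₂ ∈ G.edgeSet, e₁ ≠ e₂ → (∃ v, v ∈ e₁ ∧ v ∈ e₂) → c e₁ ≠ c e₂

/-- The subgraph consisting of edges colored `a` or `b`. -/
def twoColorSubgraph {V : Type*} (G : SimpleGraph V) (c : Sym2 V → ℕ) (a b : ℕ) :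
    SimpleGraph V where
  Adj x y := G.Adj x y ∧ (c s(x, y) = a ∨ c s(x, y) = b)
  symm := by
    constructor
    intro x y h
    refine ⟨h.1.symm, ?_⟩
    rw [Sym2.eq_swap]
    exact h.2
  loopless := by
    constructor
    intro x h
    exact G.irrefl h.1

/-- An acyclic edge-coloring: proper, and any two color classes induce an acyclic graph. -/
def AcyclicEdgeColoring {V : Type*} (G : SimpleGraph V) (c : Sym2 V → ℕ) : Prop :=
  ProperEdgeColoring G c ∧ ∀ a b : ℕ, (twoColorSubgraph G c a b).IsAcyclic

/-- `G` has an acyclic edge-coloring using colors `0, …, k-1`. -/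
def HasAcyclicEdgeColoring {V : Type*} (G : SimpleGraph V) (k : ℕ) : Prop :=
  ∃ c : Sym2 V → ℕ, AcyclicEdgeColoring G c ∧ ∀ e ∈ G.edgeSet, c e < k
/-- `G` contains `H` as a minor: there are disjoint nonempty connected branch sets,
one for each vertex of `H`, with edges of `G` between branch sets of adjacent
vertices of `H`. -/
def HasMinor {V W : Type*} (G : SimpleGraph V) (H : SimpleGraph W) : Prop :=
  ∃ f : W → Set V,
    (∀ w, (f w).Nonempty) ∧
    (∀ w, (G.induce (f w)).Connected) ∧
    (∀ w₁ w₂, w₁ ≠ w₂ → Disjoint (f w₁) (f w₂)) ∧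
    (∀ w₁ w₂, H.Adj w₁ w₂ → ∃ v₁ ∈ f w₁, ∃ v₂ ∈ f w₂, G.Adj v₁ v₂)

/-- Planarity, via Wagner's theorem: no `K₅` minor and no `K₃,₃` minor. -/
def Planar {V : Type*} (G : SimpleGraph V) : Prop :=
  ¬ HasMinor G (⊤ : SimpleGraph (Fin 5)) ∧
  ¬ HasMinor G (completeBipartiteGraph (Fin 3) (Fin 3))

/-- The maximum degree of a finite graph. -/
noncomputable def maxDeg {V : Type*} [Fintype V] (G : SimpleGraph V) : ℕ :=
  Finset.univ.sup fun v => (G.neighborSet v).ncard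


section AuxiliaryLemmas

open SimpleGraph

variable {V : Type*} {W : Type*}

/-- last element of a nodup list is not in dropLast -/
lemma last_not_mem_dropLast {l : List V} (hl : l.Nodup) (h : l ≠ []) :
    l.getLast h ∉ l.dropLast := by
  intro hm
  have heq := List.dropLast_append_getLast h
  rw [← heq] at hl
  exact (List.disjoint_of_nodup_append hl) hm (List.mem_singleton_self _)

lemma closed_mem_tail {G : SimpleGraph V} {u : V} {p : G.Walk u u} (hp : ¬p.Nil) {z : V} :
    z ∈ p.support ↔ z ∈ p.support.tail := by
  obtain ⟨t, h, q, rfl⟩ := SimpleGraph.Walk.not_nil_iff.mp hp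
  rw [Walk.support_cons]
  constructor
  · rintro hz
    rcases List.mem_cons.mp hz with rfl | hz
    · simpa using q.end_mem_support
    · simpa using hz
  · intro hz
    exact List.mem_cons_of_mem _ (by simpa using hz)

lemma walk_side {G' : SimpleGraph V} {S : Set V} {v₀ : V}
    (hstep : ∀ ⦃z t : V⦄, z ∈ S → z ≠ v₀ → G'.Adj z t → t ∈ S) :
    ∀ {x y : V} (p : G'.Walk x y), x ∈ S → (∀ z ∈ p.support.dropLast, z ≠ v₀) →
      ∀ z ∈ p.support, z ∈ S := by
  intro x y p
  induction p with
  | nil =>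
    intro hx _ z hz
    rw [Walk.support_nil, List.mem_singleton] at hz
    exact hz ▸ hx
  | @cons x t y h p ih =>
    intro hx hd z hz
    have hdrop : (Walk.cons h p).support.dropLast = x :: p.support.dropLast := by
      rw [Walk.support_cons, List.dropLast_cons_of_ne_nil p.support_ne_nil]
    have hxv : x ≠ v₀ := hd x (by rw [hdrop]; exact List.mem_cons_self)
    have ht : t ∈ S := hstep hx hxv h
    rw [Walk.support_cons] at hz
    rcases List.mem_cons.mp hz with rfl | hz
    · exact hx
    · exact ih ht (fun z hz' => hd z (by rw [hdrop]; exact List.mem_cons_of_mem _ hz')) z hz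

lemma cycle_side [DecidableEq V] {G' : SimpleGraph V} {A B : Set V} {v₀ : V}
    (hU : A ∪ B = Set.univ) (hI : A ∩ B ⊆ {v₀})
    (hE : ∀ x y, G'.Adj x y → (x ∈ A ∧ y ∈ A) ∨ (x ∈ B ∧ y ∈ B))
    {u : V} (w : G'.Walk u u) (hw : w.IsCycle) :
    (∀ z ∈ w.support, z ∈ A) ∨ (∀ z ∈ w.support, z ∈ B) := by
  have hstepA : ∀ ⦃z t : V⦄, z ∈ A → z ≠ v₀ → G'.Adj z t → t ∈ A := by
    intro z t hz hzv hadj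
    rcases hE z t hadj with ⟨_, h⟩ | ⟨hzB, _⟩
    · exact h
    · exact absurd (hI ⟨hz, hzB⟩) hzv
  have hstepB : ∀ ⦃z t : V⦄, z ∈ B → z ≠ v₀ → G'.Adj z t → t ∈ B := by
    intro z t hz hzv hadj
    rcases hE z t hadj with ⟨hzA, _⟩ | ⟨_, h⟩
    · exact absurd (hI ⟨hzA, hz⟩) hzv
    · exact h
  by_cases hv : v₀ ∈ w.support
  · set w' := w.rotate v₀ hv with hw'def
    have hw' : w'.IsCycle := hw.rotate hv
    have hmem : ∀ z, z ∈ w.support ↔ z ∈ w'.support := by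
      intro z
      rw [closed_mem_tail hw.not_nil, closed_mem_tail hw'.not_nil]
      exact ((Walk.support_rotate w v₀ hv).mem_iff).symm
    obtain ⟨t, hadj, q, hq⟩ := SimpleGraph.Walk.not_nil_iff.mp hw'.not_nil
    have hcyc := hq ▸ hw'
    have hqp := (Walk.cons_isCycle_iff q hadj).mp hcyc
    have hlast : v₀ ∉ q.support.dropLast := by
      have := last_not_mem_dropLast hqp.1.support_nodup q.support_ne_nil
      rwa [Walk.getLast_support] at this
    have hsup : ∀ z ∈ w.support, z = v₀ ∨ z ∈ q.support := by
      intro z hz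
      rw [hmem, hq, Walk.support_cons] at hz
      exact List.mem_cons.mp hz
    rcases hE v₀ t hadj with ⟨hv₀, ht⟩ | ⟨hv₀, ht⟩
    · left
      intro z hz
      rcases hsup z hz with rfl | hz'
      · exact hv₀
      · exact walk_side hstepA q ht (fun z hz' hzv => hlast (hzv ▸ hz')) z hz'
    · right
      intro z hz
      rcases hsup z hz with rfl | hz'
      · exact hv₀
      · exact walk_side hstepB q ht (fun z hz' hzv => hlast (hzv ▸ hz')) z hz'
  · have hnv : ∀ z ∈ w.support.dropLast, z ≠ v₀ := by
      intro z hz heq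
      exact hv (heq ▸ List.dropLast_subset _ hz)
    have hu : u ∈ A ∪ B := hU ▸ Set.mem_univ u
    rcases hu with hu | hu
    · exact Or.inl (walk_side hstepA w hu hnv)
    · exact Or.inr (walk_side hstepB w hu hnv)



lemma lift_walk {G' : SimpleGraph V} {H' : SimpleGraph W} {S : Set V} {g : V → W}
    (hadj : ∀ x y, x ∈ S → y ∈ S → G'.Adj x y → H'.Adj (g x) (g y)) :
    ∀ {x y : V} (w : G'.Walk x y), (∀ z ∈ w.support, z ∈ S) →
      ∃ w' : H'.Walk (g x) (g y),
        w'.support = w.support.map g ∧ w'.edges = w.edges.map (Sym2.map g) := by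
  intro x y w
  induction w with
  | nil => intro _; exact ⟨Walk.nil, by simp, by simp⟩
  | @cons x t y h p ih =>
    intro hs
    obtain ⟨w', h1, h2⟩ := ih (fun z hz => hs z (List.mem_cons_of_mem _ hz))
    have hx : x ∈ S := hs _ (Walk.start_mem_support _)
    have ht : t ∈ S := hs _ (List.mem_cons_of_mem _ (Walk.start_mem_support p))
    exact ⟨Walk.cons (hadj _ _ hx ht h) w', by simp [h1], by simp [h2]⟩

lemma sym2_map_inj_on {g : V → W} {S : Set V} (hinj : Set.InjOn g S)
    {a b c d : V} (ha : a ∈ S) (hb : b ∈ S) (hc : c ∈ S) (hd : d ∈ S)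
    (h : Sym2.map g s(a, b) = Sym2.map g s(c, d)) : s(a, b) = s(c, d) := by
  simp only [Sym2.map_pair_eq, Sym2.eq_iff] at h ⊢
  rcases h with ⟨h1, h2⟩ | ⟨h1, h2⟩
  · exact Or.inl ⟨hinj ha hc h1, hinj hb hd h2⟩
  · exact Or.inr ⟨hinj ha hd h1, hinj hb hc h2⟩

lemma lift_cycle {G' : SimpleGraph V} {H' : SimpleGraph W} {S : Set V} {g : V → W}
    (hadj : ∀ x y, x ∈ S → y ∈ S → G'.Adj x y → H'.Adj (g x) (g y))
    (hinj : Set.InjOn g S) {u : V} (w : G'.Walk u u)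
    (hS : ∀ z ∈ w.support, z ∈ S) (hw : w.IsCycle) :
    ∃ w' : H'.Walk (g u) (g u), w'.IsCycle := by
  obtain ⟨w', h1, h2⟩ := lift_walk hadj w hS
  refine ⟨w', ?_⟩
  rw [Walk.isCycle_def] at hw ⊢
  obtain ⟨htrail, hne, hnodup⟩ := hw
  refine ⟨?_, ?_, ?_⟩
  · rw [Walk.isTrail_def] at htrail ⊢
    rw [h2]
    refine List.Nodup.map_on ?_ htrail
    intro e he e' he' heq
    induction e with
    | h a b =>
      induction e' with
      | h c d =>
        exact sym2_map_inj_on hinj (hS _ (Walk.fst_mem_support_of_mem_edges w he))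
          (hS _ (Walk.snd_mem_support_of_mem_edges w he))
          (hS _ (Walk.fst_mem_support_of_mem_edges w he'))
          (hS _ (Walk.snd_mem_support_of_mem_edges w he')) heq
  · intro hnil
    have : w'.edges = [] := by rw [hnil]; rfl
    rw [h2, List.map_eq_nil_iff] at this
    have h3 := w.length_edges
    rw [this] at h3
    simp at h3
    have h4 : 3 ≤ w.length := (show w.IsCycle by rw [Walk.isCycle_def]; exact ⟨htrail, hne, hnodup⟩).three_le_length
    omega
  · rw [h1, ← List.map_tail]
    refine List.Nodup.map_on ?_ hnodup
    intro a ha b hb heq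
    exact hinj (hS _ (List.mem_of_mem_tail ha)) (hS _ (List.mem_of_mem_tail hb)) heq
variable {V W X : Type*}

/-- induced subgraph of a comap is isomorphic to the induced subgraph of the image -/
noncomputable def comapInduceIso (f : V → W) (hf : Function.Injective f) (G : SimpleGraph W)
    (s : Set V) : ((G.comap f).induce s) ≃g (G.induce (f '' s)) where
  toEquiv := Equiv.Set.image f s hf
  map_rel_iff' := by
    intro a b
    simp [Equiv.Set.image, Equiv.Set.imageOfInjOn, comap_adj]

lemma hasMinor_of_comap {f : V → W} (hf : Function.Injective f) {G : SimpleGraph W}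
    {H : SimpleGraph X} (h : HasMinor (G.comap f) H) : HasMinor G H := by
  obtain ⟨Bs, hne, hconn, hdisj, hadj⟩ := h
  refine ⟨fun w => f '' Bs w, fun w => (hne w).image f, ?_, ?_, ?_⟩
  · intro w
    exact ((comapInduceIso f hf G (Bs w)).connected_iff).mp (hconn w)
  · intro w₁ w₂ hw
    exact (Set.disjoint_image_iff hf).mpr (hdisj w₁ w₂ hw)
  · intro w₁ w₂ hw
    obtain ⟨v₁, h₁, v₂, h₂, ha⟩ := hadj w₁ w₂ hw
    exact ⟨f v₁, Set.mem_image_of_mem f h₁, f v₂, Set.mem_image_of_mem f h₂, ha⟩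

lemma planar_comap {f : V → W} (hf : Function.Injective f) {G : SimpleGraph W}
    (hG : Planar G) : Planar (G.comap f) :=
  ⟨fun h => hG.1 (hasMinor_of_comap hf h), fun h => hG.2 (hasMinor_of_comap hf h)⟩

lemma maxDeg_comap_le [Fintype V] [Fintype W] (f : V → W) (hf : Function.Injective f)
    (G : SimpleGraph W) : maxDeg (G.comap f) ≤ maxDeg G := by
  apply Finset.sup_le
  intro v _
  calc ((G.comap f).neighborSet v).ncard
      = (f '' (G.comap f).neighborSet v).ncard := (Set.ncard_image_of_injective _ hf).symm
    _ ≤ (G.neighborSet (f v)).ncard := by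
        apply Set.ncard_le_ncard ?_ (Set.toFinite _)
        rintro x ⟨u, hu, rfl⟩
        exact hu
    _ ≤ maxDeg G := Finset.le_sup (f := fun v => (G.neighborSet v).ncard) (Finset.mem_univ _)

lemma exists_recolor (k : ℕ) (SA SB : Finset ℕ) (hSA : ∀ s ∈ SA, s < k)
    (hSB : ∀ s ∈ SB, s < k) (hcard : SA.card + SB.card ≤ k) :
    ∃ π : ℕ → ℕ, Function.Injective π ∧ (∀ x, x < k → π x < k) ∧ (∀ b ∈ SB, π b ∉ SA) := by
  classical
  set R := Finset.range k with hR
  have hSAR : SA ⊆ R := fun s hs => Finset.mem_range.mpr (hSA s hs)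
  have hSBR : SB ⊆ R := fun s hs => Finset.mem_range.mpr (hSB s hs)
  set T := R \ SA with hT
  have hTcard : SB.card ≤ T.card := by
    rw [hT, Finset.card_sdiff_of_subset hSAR, Finset.card_range]
    omega
  obtain ⟨T', hT'sub, hT'card⟩ := Finset.exists_subset_card_eq hTcard
  have hT'R : T' ⊆ R := hT'sub.trans (Finset.sdiff_subset)
  have e1 : {x // x ∈ SB} ≃ {x // x ∈ T'} := Finset.equivOfCardEq hT'card.symm
  have hc2 : (R \ SB).card = (R \ T').card := by
    rw [Finset.card_sdiff_of_subset hSBR, Finset.card_sdiff_of_subset hT'R, hT'card]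
  have e2 : {x // x ∈ R \ SB} ≃ {x // x ∈ R \ T'} := Finset.equivOfCardEq hc2
  refine ⟨fun x => if h : x ∈ SB then (e1 ⟨x, h⟩ : ℕ)
    else if h2 : x ∈ R then (e2 ⟨x, Finset.mem_sdiff.mpr ⟨h2, h⟩⟩ : ℕ) else x, ?_, ?_, ?_⟩
  · intro x y hxy
    dsimp only at hxy
    by_cases hx : x ∈ SB <;> by_cases hy : y ∈ SB
    · rw [dif_pos hx, dif_pos hy] at hxy
      have := e1.injective (Subtype.ext hxy)
      exact congrArg Subtype.val this
    all_goals (try rw [dif_pos hx, dif_neg hy] at hxy) <;>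
      (try rw [dif_neg hx, dif_pos hy] at hxy) <;>
      (try rw [dif_neg hx, dif_neg hy] at hxy)
    · -- x ∈ SB, y ∉ SB
      exfalso
      have hxT' : (e1 ⟨x, hx⟩ : ℕ) ∈ T' := (e1 ⟨x, hx⟩).2
      by_cases h2 : y ∈ R
      · rw [dif_pos h2] at hxy
        have : (e2 ⟨y, Finset.mem_sdiff.mpr ⟨h2, hy⟩⟩ : ℕ) ∈ R \ T' := (e2 _).2
        rw [← hxy] at this
        exact (Finset.mem_sdiff.mp this).2 hxT'
      · rw [dif_neg h2] at hxy
        exact h2 (hT'R (hxy ▸ hxT'))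
    · -- x ∉ SB, y ∈ SB
      exfalso
      have hyT' : (e1 ⟨y, hy⟩ : ℕ) ∈ T' := (e1 ⟨y, hy⟩).2
      by_cases h2 : x ∈ R
      · rw [dif_pos h2] at hxy
        have : (e2 ⟨x, Finset.mem_sdiff.mpr ⟨h2, hx⟩⟩ : ℕ) ∈ R \ T' := (e2 _).2
        rw [hxy] at this
        exact (Finset.mem_sdiff.mp this).2 hyT'
      · rw [dif_neg h2] at hxy
        exact h2 (hT'R (hxy ▸ hyT'))
    · -- neither in SB
      by_cases h2x : x ∈ R <;> by_cases h2y : y ∈ R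
      · rw [dif_pos h2x, dif_pos h2y] at hxy
        have := e2.injective (Subtype.ext hxy)
        exact congrArg Subtype.val this
      · rw [dif_pos h2x, dif_neg h2y] at hxy
        exact absurd (hxy ▸ (Finset.mem_sdiff.mp (e2 ⟨x, Finset.mem_sdiff.mpr ⟨h2x, hx⟩⟩).2).1) h2y
      · rw [dif_neg h2x, dif_pos h2y] at hxy
        exact absurd ((Finset.mem_sdiff.mp ((hxy ▸ (e2 ⟨y, Finset.mem_sdiff.mpr ⟨h2y, hy⟩⟩).2) : x ∈ R \ T')).1) h2x
      · rw [dif_neg h2x, dif_neg h2y] at hxy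
        exact hxy
  · intro x hx
    dsimp only
    by_cases h : x ∈ SB
    · rw [dif_pos h]
      exact Finset.mem_range.mp (hT'R (e1 ⟨x, h⟩).2)
    · rw [dif_neg h, dif_pos (Finset.mem_range.mpr hx)]
      exact Finset.mem_range.mp (Finset.mem_sdiff.mp (e2 _).2).1
  · intro b hb
    dsimp only
    rw [dif_pos hb]
    have : (e1 ⟨b, hb⟩ : ℕ) ∈ T := hT'sub (e1 ⟨b, hb⟩).2
    exact (Finset.mem_sdiff.mp this).2
open SimpleGraph in
lemma side_coloring {n : ℕ} (G : SimpleGraph (Fin n)) (hplanar : Planar G)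
    (hmin : ∀ m : ℕ, m < n → ∀ H : SimpleGraph (Fin m), Planar H →
      HasAcyclicEdgeColoring H (max (maxDeg H) 420000000000000))
    (S : Set (Fin n)) (hSne : S.Nonempty) (hSu : S ≠ Set.univ) :
    ∃ c : Sym2 (Fin n) → ℕ,
      (∀ x y, G.Adj x y → x ∈ S → y ∈ S → c s(x, y) < max (maxDeg G) 420000000000000) ∧
      (∀ x y x' y', G.Adj x y → G.Adj x' y' → x ∈ S → y ∈ S → x' ∈ S → y' ∈ S →
        s(x, y) ≠ s(x', y') → (∃ v, v ∈ s(x, y) ∧ v ∈ s(x', y')) →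
        c s(x, y) ≠ c s(x', y')) ∧
      (∀ a b : ℕ, ∀ u : Fin n, ∀ w : (twoColorSubgraph G c a b).Walk u u,
        (∀ z ∈ w.support, z ∈ S) → ¬ w.IsCycle) := by
  classical
  obtain ⟨x₀, hx₀⟩ := hSne
  have hmlt : Fintype.card ↥S < n := by
    obtain ⟨y, hy⟩ : ∃ y, y ∉ S := by
      by_contra h
      push_neg at h
      exact hSu (Set.eq_univ_iff_forall.mpr h)
    have := Fintype.card_subtype_lt (p := fun x => x ∈ S) hy
    simpa using this
  set m := Fintype.card ↥S with hm
  set e : Fin m ≃ ↥S := (Fintype.equivFin ↥S).symm with he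
  set ι : Fin m → Fin n := fun i => ((e i) : Fin n) with hidef
  have hι : Function.Injective ι := fun i j h => e.injective (Subtype.ext h)
  set H := G.comap ι with hH
  obtain ⟨cS, ⟨hprop, hacyc⟩, hbound⟩ := hmin m hmlt H (planar_comap hι hplanar)
  have hm0 : 0 < m := Fintype.card_pos_iff.mpr ⟨⟨x₀, hx₀⟩⟩
  set g : Fin n → Fin m := fun x => if h : x ∈ S then e.symm ⟨x, h⟩ else ⟨0, hm0⟩ with hgdef
  have hg : ∀ x, x ∈ S → ι (g x) = x := by
    intro x hx
    simp [hgdef, hidef, dif_pos hx]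
  have hHadj : ∀ x y, x ∈ S → y ∈ S → (G.Adj x y ↔ H.Adj (g x) (g y)) := by
    intro x y hx hy
    rw [hH, comap_adj, hg x hx, hg y hy]
  have hk : max (maxDeg H) 420000000000000 ≤ max (maxDeg G) 420000000000000 :=
    max_le_max (maxDeg_comap_le ι hι G) le_rfl
  have hinjOn : Set.InjOn g S := by
    intro x hx y hy hxy
    rw [← hg x hx, ← hg y hy, hxy]
  refine ⟨fun z => cS (Sym2.map g z), ?_, ?_, ?_⟩
  · intro x y hadj hx hy
    dsimp only
    rw [Sym2.map_pair_eq]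
    have hmem : s(g x, g y) ∈ H.edgeSet := (mem_edgeSet H).mpr ((hHadj x y hx hy).mp hadj)
    exact lt_of_lt_of_le (hbound _ hmem) hk
  · intro x y x' y' h h' hx hy hx' hy' hne hshare
    dsimp only
    rw [Sym2.map_pair_eq, Sym2.map_pair_eq]
    have hmem1 : s(g x, g y) ∈ H.edgeSet := (mem_edgeSet H).mpr ((hHadj x y hx hy).mp h)
    have hmem2 : s(g x', g y') ∈ H.edgeSet := (mem_edgeSet H).mpr ((hHadj x' y' hx' hy').mp h')
    refine hprop _ hmem1 _ hmem2 ?_ ?_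
    · intro heq
      apply hne
      have := congrArg (Sym2.map ι) heq
      rwa [Sym2.map_pair_eq, Sym2.map_pair_eq, hg x hx, hg y hy, hg x' hx', hg y' hy'] at this
    · obtain ⟨v, hv1, hv2⟩ := hshare
      refine ⟨g v, ?_, ?_⟩
      · rcases Sym2.mem_iff.mp hv1 with rfl | rfl <;> simp [Sym2.mem_iff]
      · rcases Sym2.mem_iff.mp hv2 with rfl | rfl <;> simp [Sym2.mem_iff]
  · intro a b u w hsup hcyc
    have hadj2 : ∀ x y, x ∈ S → y ∈ S →
        (twoColorSubgraph G (fun z => cS (Sym2.map g z)) a b).Adj x y →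
        (twoColorSubgraph H cS a b).Adj (g x) (g y) := by
      rintro x y hx hy ⟨h1, h2⟩
      refine ⟨(hHadj x y hx hy).mp h1, ?_⟩
      dsimp only at h2
      rwa [Sym2.map_pair_eq] at h2
    obtain ⟨w', hw'⟩ := lift_cycle hadj2 hinjOn w hsup hcyc
    exact (hacyc a b) w' hw'
open SimpleGraph in
lemma combine {n : ℕ} (G : SimpleGraph (Fin n)) (hplanar : Planar G)
    (hmin : ∀ m : ℕ, m < n → ∀ H : SimpleGraph (Fin m), Planar H →
      HasAcyclicEdgeColoring H (max (maxDeg H) 420000000000000))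
    (A B : Set (Fin n)) (v₀ : Fin n)
    (hU : A ∪ B = Set.univ) (hI : A ∩ B ⊆ {v₀})
    (hE : ∀ x y, G.Adj x y → (x ∈ A ∧ y ∈ A) ∨ (x ∈ B ∧ y ∈ B))
    (hAne : A.Nonempty) (hBne : B.Nonempty) (hAu : A ≠ Set.univ) (hBu : B ≠ Set.univ) :
    HasAcyclicEdgeColoring G (max (maxDeg G) 420000000000000) := by
  classical
  obtain ⟨c₁, hP1A, hP2A, hP3A⟩ := side_coloring G hplanar hmin A hAne hAu
  obtain ⟨c₂, hP1B, hP2B, hP3B⟩ := side_coloring G hplanar hmin B hBne hBu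
  have hedge : ∀ x y, G.Adj x y →
      (x ∈ A ∧ y ∈ A) ∨ ((x ∈ B ∧ y ∈ B) ∧ ¬(x ∈ A ∧ y ∈ A)) := by
    intro x y hadj
    rcases hE x y hadj with h | h
    · exact Or.inl h
    · by_cases h2 : x ∈ A ∧ y ∈ A
      · exact Or.inl h2
      · exact Or.inr ⟨h, h2⟩
  set NA : Finset (Fin n) := Finset.univ.filter (fun x => G.Adj v₀ x ∧ x ∈ A) with hNA
  set NB : Finset (Fin n) := Finset.univ.filter (fun x => G.Adj v₀ x ∧ x ∉ A) with hNB
  set SA : Finset ℕ := NA.image (fun x => c₁ s(v₀, x)) with hSA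
  set SB : Finset ℕ := NB.image (fun x => c₂ s(v₀, x)) with hSB
  have hNAmem : ∀ x ∈ NA, G.Adj v₀ x ∧ v₀ ∈ A ∧ x ∈ A := by
    intro x hx
    rw [hNA, Finset.mem_filter] at hx
    obtain ⟨-, hadj, hxA⟩ := hx
    rcases hE v₀ x hadj with ⟨h, _⟩ | ⟨_, hx2⟩
    · exact ⟨hadj, h, hxA⟩
    · exact absurd (hI ⟨hxA, hx2⟩) hadj.ne.symm
  have hNBmem : ∀ x ∈ NB, G.Adj v₀ x ∧ v₀ ∈ B ∧ x ∈ B := by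
    intro x hx
    rw [hNB, Finset.mem_filter] at hx
    obtain ⟨-, hadj, hxA⟩ := hx
    rcases hE v₀ x hadj with ⟨_, h⟩ | h
    · exact absurd h hxA
    · exact ⟨hadj, h⟩
  have hSAlt : ∀ s ∈ SA, s < max (maxDeg G) 420000000000000 := by
    intro s hs
    rw [hSA, Finset.mem_image] at hs
    obtain ⟨x, hx, rfl⟩ := hs
    obtain ⟨hadj, hv₀, hxA⟩ := hNAmem x hx
    exact hP1A v₀ x hadj hv₀ hxA
  have hSBlt : ∀ s ∈ SB, s < max (maxDeg G) 420000000000000 := by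
    intro s hs
    rw [hSB, Finset.mem_image] at hs
    obtain ⟨x, hx, rfl⟩ := hs
    obtain ⟨hadj, hv₀, hxB⟩ := hNBmem x hx
    exact hP1B v₀ x hadj hv₀ hxB
  have hdeg : SA.card + SB.card ≤ max (maxDeg G) 420000000000000 := by
    have h1 : SA.card ≤ NA.card := Finset.card_image_le
    have h2 : SB.card ≤ NB.card := Finset.card_image_le
    have h3 : NA.card + NB.card = (Finset.univ.filter (fun x => G.Adj v₀ x)).card := by
      rw [hNA, hNB, ← Finset.filter_filter, ← Finset.filter_filter]
      exact Finset.card_filter_add_card_filter_not (fun x => x ∈ A)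
    have h4 : (Finset.univ.filter (fun x => G.Adj v₀ x)).card = (G.neighborSet v₀).ncard := by
      rw [Set.ncard_eq_toFinset_card']
      congr 1
      ext x
      simp [SimpleGraph.mem_neighborSet]
    have h5 : (G.neighborSet v₀).ncard ≤ maxDeg G :=
      Finset.le_sup (f := fun v => (G.neighborSet v).ncard) (Finset.mem_univ v₀)
    have h6 : maxDeg G ≤ max (maxDeg G) 420000000000000 := le_max_left _ _
    omega
  obtain ⟨π, hπinj, hπlt, hπSA⟩ :=
    exists_recolor (max (maxDeg G) 420000000000000) SA SB hSAlt hSBlt hdeg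
  set c : Sym2 (Fin n) → ℕ := fun z => if ∀ x ∈ z, x ∈ A then c₁ z else π (c₂ z) with hc
  have hcA : ∀ x y, x ∈ A → y ∈ A → c s(x, y) = c₁ s(x, y) := by
    intro x y hx hy
    rw [hc]
    dsimp only
    rw [if_pos]
    intro z hz
    rcases Sym2.mem_iff.mp hz with rfl | rfl <;> assumption
  have hcB : ∀ x y, ¬(x ∈ A ∧ y ∈ A) → c s(x, y) = π (c₂ s(x, y)) := by
    intro x y hxy
    rw [hc]
    dsimp only
    rw [if_neg]
    intro hall
    exact hxy ⟨hall x (by simp), hall y (by simp)⟩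
  have hmemSA : ∀ x y, G.Adj x y → x ∈ A → y ∈ A → v₀ ∈ s(x, y) → c s(x, y) ∈ SA := by
    intro x y hadj hx hy hv
    rw [hcA x y hx hy]
    rcases Sym2.mem_iff.mp hv with rfl | rfl
    · rw [hSA, Finset.mem_image]
      exact ⟨y, by rw [hNA, Finset.mem_filter]; exact ⟨Finset.mem_univ _, hadj, hy⟩, rfl⟩
    · rw [hSA, Finset.mem_image]
      refine ⟨x, by rw [hNA, Finset.mem_filter]; exact ⟨Finset.mem_univ _, hadj.symm, hx⟩, ?_⟩
      rw [Sym2.eq_swap]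
  have hmemSB : ∀ x y, G.Adj x y → x ∈ B → y ∈ B → ¬(x ∈ A ∧ y ∈ A) → v₀ ∈ s(x, y) →
      ∃ s ∈ SB, c s(x, y) = π s := by
    intro x y hadj hxB hyB hnA hv
    rw [hcB x y hnA]
    rcases Sym2.mem_iff.mp hv with rfl | rfl
    · have hyA : y ∉ A := fun hyA => hadj.ne (hI ⟨hyA, hyB⟩).symm
      refine ⟨c₂ s(v₀, y), Finset.mem_image.mpr ⟨y, ?_, rfl⟩, rfl⟩
      rw [hNB, Finset.mem_filter]
      exact ⟨Finset.mem_univ _, hadj, hyA⟩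
    · have hxA : x ∉ A := fun hxA => hadj.ne (hI ⟨hxA, hxB⟩)
      refine ⟨c₂ s(v₀, x), Finset.mem_image.mpr ⟨x, ?_, rfl⟩, ?_⟩
      · rw [hNB, Finset.mem_filter]
        exact ⟨Finset.mem_univ _, hadj.symm, hxA⟩
      · rw [Sym2.eq_swap]
  refine ⟨c, ⟨?_, ?_⟩, ?_⟩
  · -- proper
    intro e₁ he₁ e₂ he₂ hne hshare
    induction e₁ with
    | h x y =>
    induction e₂ with
    | h x' y' =>
    rw [mem_edgeSet] at he₁ he₂
    rcases hedge x y he₁ with ⟨hx, hy⟩ | ⟨⟨hxB, hyB⟩, hnA⟩ <;>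
      rcases hedge x' y' he₂ with ⟨hx', hy'⟩ | ⟨⟨hxB', hyB'⟩, hnA'⟩
    · rw [hcA x y hx hy, hcA x' y' hx' hy']
      exact hP2A x y x' y' he₁ he₂ hx hy hx' hy' hne hshare
    · obtain ⟨v, hv1, hv2⟩ := hshare
      have hvA : v ∈ A := by rcases Sym2.mem_iff.mp hv1 with rfl | rfl <;> assumption
      have hvB : v ∈ B := by rcases Sym2.mem_iff.mp hv2 with rfl | rfl <;> assumption
      have hveq : v = v₀ := hI ⟨hvA, hvB⟩
      subst hveq
      have h1 := hmemSA x y he₁ hx hy hv1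
      obtain ⟨s, hs, heq⟩ := hmemSB x' y' he₂ hxB' hyB' hnA' hv2
      rw [heq]
      intro hcc
      exact hπSA s hs (by rw [← hcc]; exact h1)
    · obtain ⟨v, hv1, hv2⟩ := hshare
      have hvB : v ∈ B := by rcases Sym2.mem_iff.mp hv1 with rfl | rfl <;> assumption
      have hvA : v ∈ A := by rcases Sym2.mem_iff.mp hv2 with rfl | rfl <;> assumption
      have hveq : v = v₀ := hI ⟨hvA, hvB⟩
      subst hveq
      have h1 := hmemSA x' y' he₂ hx' hy' hv2
      obtain ⟨s, hs, heq⟩ := hmemSB x y he₁ hxB hyB hnA hv1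
      rw [heq]
      intro hcc
      exact hπSA s hs (by rw [hcc]; exact h1)
    · rw [hcB x y hnA, hcB x' y' hnA']
      intro hcc
      exact hP2B x y x' y' he₁ he₂ hxB hyB hxB' hyB' hne hshare (hπinj hcc)
  · -- acyclic
    intro a b u w hw
    have hE' : ∀ x y, (twoColorSubgraph G c a b).Adj x y →
        (x ∈ A ∧ y ∈ A) ∨ (x ∈ B ∧ y ∈ B) := fun x y h => hE x y h.1
    rcases cycle_side hU hI hE' w hw with hside | hside
    · have hedges : ∀ e ∈ w.edges, e ∈ (twoColorSubgraph G c₁ a b).edgeSet := by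
        intro e he
        have hmem := w.edges_subset_edgeSet he
        induction e with
        | h p q =>
        rw [mem_edgeSet] at hmem ⊢
        obtain ⟨hpq, hcol⟩ := hmem
        have hp : p ∈ A := hside p (w.fst_mem_support_of_mem_edges he)
        have hq : q ∈ A := hside q (w.snd_mem_support_of_mem_edges he)
        exact ⟨hpq, by rwa [hcA p q hp hq] at hcol⟩
      exact hP3A a b u (w.transfer _ hedges)
        (by rw [Walk.support_transfer]; exact hside) (hw.transfer hedges)
    · have hedges : ∀ e ∈ w.edges,
          e ∈ (twoColorSubgraph G c₂ (Function.invFun π a) (Function.invFun π b)).edgeSet := by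
        intro e he
        have hmem := w.edges_subset_edgeSet he
        induction e with
        | h p q =>
        rw [mem_edgeSet] at hmem ⊢
        obtain ⟨hpq, hcol⟩ := hmem
        have hp : p ∈ B := hside p (w.fst_mem_support_of_mem_edges he)
        have hq : q ∈ B := hside q (w.snd_mem_support_of_mem_edges he)
        have hnA2 : ¬(p ∈ A ∧ q ∈ A) := by
          rintro ⟨hpA, hqA⟩
          have hp0 : p = v₀ := hI ⟨hpA, hp⟩
          have hq0 : q = v₀ := hI ⟨hqA, hq⟩
          exact hpq.ne (hp0.trans hq0.symm)
        rw [hcB p q hnA2] at hcol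
        refine ⟨hpq, ?_⟩
        rcases hcol with h | h
        · left
          have h2 := Function.leftInverse_invFun hπinj (c₂ s(p, q))
          rw [h] at h2
          exact h2.symm
        · right
          have h2 := Function.leftInverse_invFun hπinj (c₂ s(p, q))
          rw [h] at h2
          exact h2.symm
      exact hP3B (Function.invFun π a) (Function.invFun π b) u (w.transfer _ hedges)
        (by rw [Walk.support_transfer]; exact hside) (hw.transfer hedges)
  · -- bound
    intro e he
    induction e with
    | h x y =>
    rw [mem_edgeSet] at he
    rcases hedge x y he with ⟨hx, hy⟩ | ⟨⟨hxB, hyB⟩, hnA⟩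
    · rw [hcA x y hx hy]
      exact hP1A x y he hx hy
    · rw [hcB x y hnA]
      exact hπlt _ (hP1B x y he hxB hyB)


end AuxiliaryLemmas

/-- A minimal counterexample to "every planar graph `G` satisfies
`χ'_a(G) ≤ max {Δ(G), 4.2·10¹⁴}`" must be 2-connected. -/
theorem minimal_counterexample_two_connected {n : ℕ} (G : SimpleGraph (Fin n))
    (hplanar : Planar G)
    (hcex : ¬ HasAcyclicEdgeColoring G (max (maxDeg G) 420000000000000))
    (hmin : ∀ m : ℕ, m < n → ∀ H : SimpleGraph (Fin m), Planar H →
      HasAcyclicEdgeColoring H (max (maxDeg H) 420000000000000)) :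
    G.Connected ∧ 3 ≤ n ∧ ∀ v : Fin n, (G.induce {u : Fin n | u ≠ v}).Connected := by
  classical
  have h3 : 3 ≤ n := by
    by_contra h
    push_neg at h
    apply hcex
    refine ⟨fun _ => 0, ⟨?_, ?_⟩, ?_⟩
    · intro e₁ he₁ e₂ he₂ hne hshare
      exfalso
      obtain ⟨v, hv1, hv2⟩ := hshare
      obtain ⟨w₁, rfl⟩ := Sym2.mem_iff_exists.mp hv1
      obtain ⟨w₂, rfl⟩ := Sym2.mem_iff_exists.mp hv2
      rw [SimpleGraph.mem_edgeSet] at he₁ he₂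
      have hw₁ : w₁ ≠ v := he₁.ne'
      have hw₂ : w₂ ≠ v := he₂.ne'
      have hww : w₁ ≠ w₂ := fun heq => hne (by rw [heq])
      have hcard : ({v, w₁, w₂} : Finset (Fin n)).card = 3 := by
        rw [Finset.card_insert_of_notMem (by simp [Ne.symm hw₁, Ne.symm hw₂]),
            Finset.card_insert_of_notMem (by simp [hww]), Finset.card_singleton]
      have hle := Finset.card_le_univ ({v, w₁, w₂} : Finset (Fin n))
      rw [hcard] at hle
      simp at hle
      omega
    · intro a b u w hw
      exfalso
      have h1 := hw.three_le_length
      obtain ⟨-, -, hnodup⟩ := (SimpleGraph.Walk.isCycle_def w).mp hw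
      have hlen : w.support.tail.length = w.length := by
        rw [List.length_tail, SimpleGraph.Walk.length_support]
        omega
      have hcard := hnodup.length_le_card
      rw [hlen] at hcard
      simp at hcard
      omega
    · intro e _
      exact lt_of_lt_of_le (by norm_num) (le_max_right _ _)
  have hconn : G.Connected := by
    rw [SimpleGraph.connected_iff]
    refine ⟨?_, ⟨⟨0, by omega⟩⟩⟩
    by_contra hpre
    unfold SimpleGraph.Preconnected at hpre
    push_neg at hpre
    obtain ⟨u, w, hur⟩ := hpre
    apply hcex
    refine combine G hplanar hmin {x | G.Reachable u x} {x | G.Reachable u x}ᶜ u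
      (Set.union_compl_self _) (by rw [Set.inter_compl_self]; exact Set.empty_subset _)
      ?_ ⟨u, SimpleGraph.Reachable.refl u⟩ ⟨w, hur⟩ ?_ ?_
    · intro x y hadj
      by_cases hx : G.Reachable u x
      · exact Or.inl ⟨hx, hx.trans hadj.reachable⟩
      · exact Or.inr ⟨hx, fun hy => hx (hy.trans hadj.symm.reachable)⟩
    · intro heq
      rw [Set.eq_univ_iff_forall] at heq
      exact hur (heq w)
    · intro heq
      rw [Set.eq_univ_iff_forall] at heq
      exact (heq u) (SimpleGraph.Reachable.refl u)
  refine ⟨hconn, h3, ?_⟩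
  intro v
  by_contra hncon
  apply hcex
  have hnonempty : Nonempty ↥{u : Fin n | u ≠ v} := by
    obtain ⟨u, hu⟩ := Fintype.exists_ne_of_one_lt_card (by simp; omega) v
    exact ⟨⟨u, hu⟩⟩
  have hpre : ¬(G.induce {u : Fin n | u ≠ v}).Preconnected := by
    intro h
    exact hncon ((SimpleGraph.connected_iff _).mpr ⟨h, hnonempty⟩)
  unfold SimpleGraph.Preconnected at hpre
  push_neg at hpre
  obtain ⟨⟨a, ha⟩, ⟨b, hb⟩, hab⟩ := hpre
  refine combine G hplanar hmin
    ({x | ∃ h : x ≠ v, (G.induce {u : Fin n | u ≠ v}).Reachable ⟨a, ha⟩ ⟨x, h⟩} ∪ {v})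
    ({x | ∃ h : x ≠ v, ¬(G.induce {u : Fin n | u ≠ v}).Reachable ⟨a, ha⟩ ⟨x, h⟩} ∪ {v})
    v ?_ ?_ ?_ ?_ ?_ ?_ ?_
  · ext x
    simp only [Set.mem_union, Set.mem_setOf_eq, Set.mem_singleton_iff, Set.mem_univ, iff_true]
    by_cases hx : x = v
    · exact Or.inl (Or.inr hx)
    · by_cases hr : (G.induce {u : Fin n | u ≠ v}).Reachable ⟨a, ha⟩ ⟨x, hx⟩
      · exact Or.inl (Or.inl ⟨hx, hr⟩)
      · exact Or.inr (Or.inl ⟨hx, hr⟩)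
  · rintro x ⟨hx1 | hx1, hx2 | hx2⟩
    · obtain ⟨h1, hr⟩ := hx1
      obtain ⟨h2, hnr⟩ := hx2
      exact absurd hr hnr
    · exact hx2
    · exact hx1
    · exact hx1
  · intro x y hadj
    by_cases hx : x = v
    · subst hx
      by_cases hr : (G.induce {u : Fin n | u ≠ x}).Reachable ⟨a, ha⟩ ⟨y, hadj.ne'⟩
      · exact Or.inl ⟨Or.inr rfl, Or.inl ⟨hadj.ne', hr⟩⟩
      · exact Or.inr ⟨Or.inr rfl, Or.inl ⟨hadj.ne', hr⟩⟩
    · by_cases hy : y = v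
      · subst hy
        by_cases hr : (G.induce {u : Fin n | u ≠ y}).Reachable ⟨a, ha⟩ ⟨x, hx⟩
        · exact Or.inl ⟨Or.inl ⟨hx, hr⟩, Or.inr rfl⟩
        · exact Or.inr ⟨Or.inl ⟨hx, hr⟩, Or.inr rfl⟩
      · have hadj' : (G.induce {u : Fin n | u ≠ v}).Adj ⟨x, hx⟩ ⟨y, hy⟩ := by
          simp [hadj]
        by_cases hr : (G.induce {u : Fin n | u ≠ v}).Reachable ⟨a, ha⟩ ⟨x, hx⟩
        · exact Or.inl ⟨Or.inl ⟨hx, hr⟩, Or.inl ⟨hy, hr.trans hadj'.reachable⟩⟩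
        · exact Or.inr ⟨Or.inl ⟨hx, hr⟩,
            Or.inl ⟨hy, fun hr2 => hr (hr2.trans hadj'.symm.reachable)⟩⟩
  · exact ⟨v, Or.inr rfl⟩
  · exact ⟨v, Or.inr rfl⟩
  · intro heq
    rw [Set.eq_univ_iff_forall] at heq
    rcases heq b with ⟨h1, hr⟩ | h1
    · exact hab hr
    · exact hb h1
  · intro heq
    rw [Set.eq_univ_iff_forall] at heq
    rcases heq a with ⟨h1, hnr⟩ | h1
    · exact hnr (SimpleGraph.Reachable.refl _)
    · exact ha h1
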